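/- arXiv:1508.03425 — 4 statements merged into one kernel-verified Lean document; each statement's English description precedes it below -/
import Mathlib

section
/- Let c be a positive natural number, let w be a Gauss word of length 2c, let x be an assignment, and let b : Fin (2c) be a base. Then the warping degree satisfies d_{b+1}(x) = d_b(x) + 1 if position b is passed over under x, and d_{b+1}(x) = d_b(x) − 1 if position b is passed under under x (indices taken mod 2c). -/
namespace Warping

/-- A Gauss word of length `2c`: every letter occurs at exactly two positions. -/
def IsGaussWord (c : ℕ) (w : Fin (2*c) → Fin c) : Prop :=
  ∀ i : Fin c, (Finset.univ.filter (fun j => w j = i)).card = 2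

/-- The cyclic successor of an index. -/
def next {n : ℕ} (b : Fin n) : Fin n :=
  ⟨((b : ℕ) + 1) % n, Nat.mod_lt _ (Nat.lt_of_le_of_lt (Nat.zero_le _) b.isLt)⟩

/-- `j` is the first (smaller) of the two positions of its letter. -/
def isFirst (c : ℕ) (w : Fin (2*c) → Fin c) (j : Fin (2*c)) : Prop :=
  ∀ j' : Fin (2*c), w j' = w j → j ≤ j'

/-- Under the assignment `x`, position `j` is passed under. -/
def passedUnder (c : ℕ) (w : Fin (2*c) → Fin c) (x : Fin c → Bool) (j : Fin (2*c)) : Prop :=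
  (x (w j) = true) ↔ isFirst c w j

/-- Time at which position `j` is met in the cyclic traversal starting at base `b`. -/
def time (c : ℕ) (b j : Fin (2*c)) : ℕ := ((j : ℕ) + 2*c - (b : ℕ)) % (2*c)

/-- The letter `i` is a warping crossing for assignment `x` and base `b`: the position of `i`
met earlier in the cyclic traversal starting at `b` is passed under. -/
def IsWarpingCrossing (c : ℕ) (w : Fin (2*c) → Fin c) (x : Fin c → Bool)
    (b : Fin (2*c)) (i : Fin c) : Prop :=
  ∃ j : Fin (2*c), w j = i ∧ (∀ j' : Fin (2*c), w j' = i → time c b j ≤ time c b j') ∧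
    passedUnder c w x j

open scoped Classical in
/-- The warping degree of the assignment `x` with base point `b`. -/
noncomputable def warpingDegree (c : ℕ) (w : Fin (2*c) → Fin c) (x : Fin c → Bool)
    (b : Fin (2*c)) : ℕ :=
  (Finset.univ.filter (fun i => IsWarpingCrossing c w x b i)).card

/-- The step `d_{b+1}(x) - d_b(x)` of the warping degree sequence. -/
noncomputable def step (c : ℕ) (w : Fin (2*c) → Fin c) (x : Fin c → Bool) (b : Fin (2*c)) : ℤ :=
  (warpingDegree c w x (next b) : ℤ) - (warpingDegree c w x b : ℤ)

private lemma time_spec (c : ℕ) (b j : Fin (2*c)) :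
    time c b j = if (b:ℕ) ≤ (j:ℕ) then (j:ℕ) - (b:ℕ) else (j:ℕ) + 2*c - (b:ℕ) := by
  have hb := b.isLt
  have hj := j.isLt
  unfold time
  split_ifs with h
  · have e : (j:ℕ) + 2*c - (b:ℕ) = ((j:ℕ) - (b:ℕ)) + 2*c := by omega
    rw [e, Nat.add_mod_right]
    exact Nat.mod_eq_of_lt (by omega)
  · exact Nat.mod_eq_of_lt (by omega)

private lemma next_spec {n : ℕ} (b : Fin n) :
    ((next b : Fin n) : ℕ) = if (b:ℕ) + 1 < n then (b:ℕ) + 1 else 0 := by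
  have hb := b.isLt
  show ((b:ℕ)+1) % n = _
  split_ifs with h
  · exact Nat.mod_eq_of_lt h
  · have e : (b:ℕ) + 1 = n := by omega
    rw [e, Nat.mod_self]

private lemma time_self (c : ℕ) (b : Fin (2*c)) : time c b b = 0 := by
  rw [time_spec]; simp

private lemma eq_of_time_zero (c : ℕ) (b j : Fin (2*c)) (h : time c b j = 0) : j = b := by
  rw [time_spec] at h
  have hb := b.isLt
  have hj := j.isLt
  apply Fin.ext
  split_ifs at h <;> omega

private lemma time_next_le (c : ℕ) (b j j' : Fin (2*c)) (hj : j ≠ b) (hj' : j' ≠ b) :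
    time c (next b) j ≤ time c (next b) j' ↔ time c b j ≤ time c b j' := by
  have hb := b.isLt
  have h1 := j.isLt
  have h2 := j'.isLt
  have hjv : (j:ℕ) ≠ (b:ℕ) := fun h => hj (Fin.ext h)
  have hj'v : (j':ℕ) ≠ (b:ℕ) := fun h => hj' (Fin.ext h)
  rw [time_spec, time_spec, time_spec, time_spec, next_spec]
  split_ifs <;> omega

private lemma time_next_lt (c : ℕ) (b j : Fin (2*c)) (hj : j ≠ b) :
    time c (next b) j < time c (next b) b := by
  have hb := b.isLt
  have h1 := j.isLt
  have hjv : (j:ℕ) ≠ (b:ℕ) := fun h => hj (Fin.ext h)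
  rw [time_spec, time_spec, next_spec]
  split_ifs <;> omega

private lemma two_positions (c : ℕ) (w : Fin (2*c) → Fin c) (hw : IsGaussWord c w)
    (i : Fin c) :
    ∃ j1 j2 : Fin (2*c), j1 ≠ j2 ∧ w j1 = i ∧ w j2 = i ∧
      ∀ j, w j = i → j = j1 ∨ j = j2 := by
  classical
  obtain ⟨j1, j2, hne, hset⟩ := Finset.card_eq_two.mp (hw i)
  refine ⟨j1, j2, hne, ?_, ?_, ?_⟩
  · have : j1 ∈ Finset.univ.filter (fun j => w j = i) := by
      rw [hset]; exact Finset.mem_insert_self _ _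
    simpa using this
  · have : j2 ∈ Finset.univ.filter (fun j => w j = i) := by
      rw [hset]; simp
    simpa using this
  · intro j hj
    have : j ∈ ({j1, j2} : Finset (Fin (2*c))) := by
      rw [← hset]; simp [hj]
    simpa using this

/-- Lemma 2.5 of Shimizu: passing an overcrossing increases the warping degree by one,
passing an undercrossing decreases it by one. -/
theorem warpingDegree_next (c : ℕ) (hc : 0 < c) (w : Fin (2*c) → Fin c)
    (hw : IsGaussWord c w) (x : Fin c → Bool) (b : Fin (2*c)) :
    (¬ passedUnder c w x b →
      (warpingDegree c w x (next b) : ℤ) = (warpingDegree c w x b : ℤ) + 1) ∧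
    (passedUnder c w x b →
      (warpingDegree c w x (next b) : ℤ) = (warpingDegree c w x b : ℤ) - 1) := by
  classical
  obtain ⟨j1, j2, hne, h1, h2, huniq⟩ := two_positions c w hw (w b)
  obtain ⟨k, hk_ne, hk, huniq'⟩ :
      ∃ k, k ≠ b ∧ w k = w b ∧ ∀ j, w j = w b → j = b ∨ j = k := by
    rcases huniq b rfl with rfl | rfl
    · exact ⟨j2, fun h => hne h.symm, h2, fun j hj => huniq j hj⟩
    · exact ⟨j1, fun h => hne h, h1, fun j hj => (huniq j hj).symm⟩
  have hfirst_b : isFirst c w b ↔ b ≤ k := by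
    constructor
    · exact fun h => h k hk
    · intro h j' hj'
      rcases huniq' j' hj' with rfl | rfl
      · exact le_refl _
      · exact h
  have hfirst_k : isFirst c w k ↔ k ≤ b := by
    constructor
    · intro h; exact h b hk.symm
    · intro h j' hj'
      rw [hk] at hj'
      rcases huniq' j' hj' with rfl | rfl
      · exact h
      · exact le_refl _
  have hflip : passedUnder c w x k ↔ ¬ passedUnder c w x b := by
    unfold passedUnder
    rw [hk, hfirst_b, hfirst_k]
    have hord : ¬ ((b:ℕ) ≤ (k:ℕ) ∧ (k:ℕ) ≤ (b:ℕ)) := by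
      rintro ⟨ha, hb'⟩; exact hk_ne (Fin.ext (by omega))
    have htot := Nat.le_total (b:ℕ) (k:ℕ)
    rw [Fin.le_def, Fin.le_def]
    tauto
  have h_cross_b : IsWarpingCrossing c w x b (w b) ↔ passedUnder c w x b := by
    constructor
    · rintro ⟨j, hj, hmin, hpu⟩
      rcases huniq' j hj with h | h
      · subst h
        exact hpu
      · subst h
        have hle := hmin b rfl
        rw [time_self] at hle
        exact absurd (eq_of_time_zero c b _ (Nat.le_zero.mp hle)) hk_ne
    · intro hpu
      exact ⟨b, rfl, fun j' _ => by rw [time_self]; exact Nat.zero_le _, hpu⟩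
  have h_cross_nb : IsWarpingCrossing c w x (next b) (w b) ↔ passedUnder c w x k := by
    constructor
    · rintro ⟨j, hj, hmin, hpu⟩
      rcases huniq' j hj with h | h
      · rw [h] at hmin
        exact absurd (hmin k hk) (not_le.mpr (time_next_lt c b k hk_ne))
      · subst h
        exact hpu
    · intro hpu
      refine ⟨k, hk, ?_, hpu⟩
      intro j' hj'
      rcases huniq' j' hj' with h | h
      · rw [h]
        exact le_of_lt (time_next_lt c b k hk_ne)
      · subst h
        exact le_refl _
  have h_other : ∀ i : Fin c, i ≠ w b →
      (IsWarpingCrossing c w x (next b) i ↔ IsWarpingCrossing c w x b i) := by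
    intro i hi
    have hnb : ∀ j : Fin (2*c), w j = i → j ≠ b := by
      rintro j hj rfl; exact hi hj.symm
    constructor
    · rintro ⟨j, hj, hmin, hpu⟩
      refine ⟨j, hj, fun j' hj' => ?_, hpu⟩
      exact (time_next_le c b j j' (hnb j hj) (hnb j' hj')).mp (hmin j' hj')
    · rintro ⟨j, hj, hmin, hpu⟩
      refine ⟨j, hj, fun j' hj' => ?_, hpu⟩
      exact (time_next_le c b j j' (hnb j hj) (hnb j' hj')).mpr (hmin j' hj')
  set S := Finset.univ.filter (fun i => IsWarpingCrossing c w x b i) with hS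
  set T := Finset.univ.filter (fun i => IsWarpingCrossing c w x (next b) i) with hT
  have eS : warpingDegree c w x b = S.card := rfl
  have eT : warpingDegree c w x (next b) = T.card := rfl
  have hmem_S : w b ∈ S ↔ passedUnder c w x b := by
    rw [hS, Finset.mem_filter]; simp [h_cross_b]
  have hmem_T : w b ∈ T ↔ passedUnder c w x k := by
    rw [hT, Finset.mem_filter]; simp [h_cross_nb]
  constructor
  · intro hnp
    have hwbS : w b ∉ S := by rw [hmem_S]; exact hnp
    have hwbT : w b ∈ T := by rw [hmem_T, hflip]; exact hnp
    have hTS : T = insert (w b) S := by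
      ext i
      by_cases hi : i = w b
      · subst hi; simp [hwbT]
      · rw [Finset.mem_insert, hS, hT, Finset.mem_filter, Finset.mem_filter]
        simp [h_other i hi, hi]
    have hcard : T.card = S.card + 1 := by
      rw [hTS, Finset.card_insert_of_notMem hwbS]
    rw [eS, eT, hcard]
    push_cast
    ring
  · intro hp
    have hwbS : w b ∈ S := by rw [hmem_S]; exact hp
    have hwbT : w b ∉ T := by rw [hmem_T, hflip]; exact fun h => h hp
    have hTS : T = S.erase (w b) := by
      ext i
      by_cases hi : i = w b
      · subst hi; simp [hwbT]
      · rw [Finset.mem_erase, hS, hT, Finset.mem_filter, Finset.mem_filter]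
        simp [h_other i hi, hi]
    have hcard : T.card = S.card - 1 := by
      rw [hTS, Finset.card_erase_of_mem hwbS]
    have hpos : 1 ≤ S.card := Finset.card_pos.mpr ⟨w b, hwbS⟩
    rw [eS, eT, hcard]
    omega

end Warping
end

section
/- Let c be a natural number and let w be a Gauss word of length 2c. Then for every base b : Fin (2c) and every natural number n, the number of assignments x : Fin c → Bool with d_b(x) = n equals the binomial coefficient (c choose n). This is property (ii) of the warping matrix: in each column, the value n appears exactly (c choose n) times. -/
namespace Warping

open Finset

lemma time_inj (c : ℕ) (b : Fin (2*c)) : Function.Injective (time c b) := by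
  intro j j' h
  have hb : (b:ℕ) < 2*c := b.isLt
  unfold time at h
  have h1 : (j:ℕ) + 2*c - b = (j:ℕ) + (2*c - b) := by omega
  have h2 : (j':ℕ) + 2*c - b = (j':ℕ) + (2*c - b) := by omega
  rw [h1, h2] at h
  have hm : (j:ℕ) ≡ (j':ℕ) [MOD 2*c] := Nat.ModEq.add_right_cancel' _ h
  have := hm
  unfold Nat.ModEq at this
  rw [Nat.mod_eq_of_lt j.isLt, Nat.mod_eq_of_lt j'.isLt] at this
  exact Fin.ext this

lemma exists_bool (c : ℕ) (w : Fin (2*c) → Fin c) (hw : IsGaussWord c w)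
    (b : Fin (2*c)) (i : Fin c) :
    ∃ ti : Bool, ∀ x : Fin c → Bool, IsWarpingCrossing c w x b i ↔ x i = ti := by
  classical
  have hne : (Finset.univ.filter (fun j => w j = i)).Nonempty := by
    rw [← Finset.card_pos, hw i]; norm_num
  obtain ⟨j₀, hj₀mem, hj₀min⟩ := Finset.exists_min_image _ (time c b) hne
  rw [mem_filter] at hj₀mem
  have hmin : ∀ j' : Fin (2*c), w j' = i → time c b j₀ ≤ time c b j' := by
    intro j' hj'; exact hj₀min j' (by simp [hj'])
  refine ⟨decide (isFirst c w j₀), fun x => ?_⟩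
  constructor
  · rintro ⟨j, hji, hjmin, hpu⟩
    have hje : j = j₀ := time_inj c b (le_antisymm (hjmin j₀ hj₀mem.2) (hmin j hji))
    subst hje
    unfold passedUnder at hpu
    rw [hji] at hpu
    by_cases hf : isFirst c w j
    · simp [hpu.mpr hf, hf]
    · simp only [hf, decide_eq_false hf]
      cases hx : x i
      · rfl
      · exact absurd (hpu.mp hx) hf
  · intro hx
    refine ⟨j₀, hj₀mem.2, hmin, ?_⟩
    unfold passedUnder
    rw [hj₀mem.2, hx]
    by_cases hf : isFirst c w j₀ <;> simp [hf]

lemma count_eq (c n : ℕ) (t : Fin c → Bool) :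
    ((Finset.univ : Finset (Fin c → Bool)).filter
      (fun x => (Finset.univ.filter fun i => x i = t i).card = n)).card = Nat.choose c n := by
  classical
  have hcard : (Finset.powersetCard n (Finset.univ : Finset (Fin c))).card = Nat.choose c n := by
    simp [Finset.card_powersetCard]
  rw [← hcard]
  apply Finset.card_bij (fun x _ => Finset.univ.filter fun i => x i = t i)
  · intro x hx
    rw [Finset.mem_powersetCard]
    exact ⟨Finset.filter_subset _ _, by simpa using (Finset.mem_filter.mp hx).2⟩
  · intro x hx y hy hxy
    funext i
    have : (i ∈ Finset.univ.filter fun i => x i = t i) ↔ (i ∈ Finset.univ.filter fun i => y i = t i) := by rw [hxy]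
    simp only [Finset.mem_filter, Finset.mem_univ, true_and] at this
    cases hxi : x i <;> cases hyi : y i <;> cases hti : t i <;> simp_all
  · intro s hs
    rw [Finset.mem_powersetCard] at hs
    refine ⟨fun i => if i ∈ s then t i else !(t i), ?_, ?_⟩
    · rw [Finset.mem_filter]
      refine ⟨Finset.mem_univ _, ?_⟩
      rw [← hs.2]
      congr 1
      ext i
      simp only [Finset.mem_filter, Finset.mem_univ, true_and]
      by_cases h : i ∈ s <;> simp [h]
    · ext i
      simp only [Finset.mem_filter, Finset.mem_univ, true_and]
      by_cases h : i ∈ s <;> simp [h]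

open scoped Classical in
/-- Property (ii) of the warping matrix: in each column, the value `n` appears exactly
`c.choose n` times. -/
theorem card_warpingDegree_eq_choose (c : ℕ) (w : Fin (2*c) → Fin c)
    (hw : IsGaussWord c w) :
    ∀ b : Fin (2*c), ∀ n : ℕ,
      ((Finset.univ : Finset (Fin c → Bool)).filter
        (fun x => warpingDegree c w x b = n)).card = Nat.choose c n := by
  classical
  intro b n
  obtain ⟨t, ht⟩ := Classical.skolem.mp (fun i => exists_bool c w hw b i)
  have hdeg : ∀ x, warpingDegree c w x b = (Finset.univ.filter fun i => x i = t i).card := by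
    intro x
    unfold warpingDegree
    congr 1
    apply Finset.filter_congr
    intro i _
    exact ht i x
  simp_rw [hdeg]
  exact count_eq c n t

end Warping
end

section
/- Let c ≥ 1 be a natural number, let w₁, w₂ be Gauss words of length 2c, and let x₀ and x₁ be assignments. Suppose the multiset of warping degree sequences of w₁ over the 2^c − 1 assignments x ≠ x₀ equals the multiset of warping degree sequences of w₂ over the 2^c − 1 assignments x ≠ x₁. Then the warping degree sequence of x₀ (for w₁) equals the warping degree sequence of x₁ (for w₂), and hence the full multisets of all 2^c warping degree sequences of w₁ and w₂ coincide. In other words, deleting one row from the warping matrix loses no information: the warping matrix M(D) of a diagram determines the warping matrix M(P) of the underlying projection together with the deleted row. -/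
namespace Warping

open scoped Classical

lemma card_filter_eval (c : ℕ) (hc : 1 ≤ c) (i : Fin c) (v : Bool) :
    ((Finset.univ : Finset (Fin c → Bool)).filter (fun x => x i = v)).card = 2^(c-1) := by
  have hswap : ∀ u : Bool,
      ((Finset.univ : Finset (Fin c → Bool)).filter (fun x => x i = u)).card =
      ((Finset.univ : Finset (Fin c → Bool)).filter (fun x => x i = !u)).card := by
    intro u
    apply Finset.card_bij' (fun x _ => Function.update x i (!x i))
      (fun x _ => Function.update x i (!x i))
    · intro x _
      funext j
      rcases eq_or_ne j i with hj | hj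
      · subst hj; simp
      · simp [Function.update_of_ne hj]
    · intro x _
      funext j
      rcases eq_or_ne j i with hj | hj
      · subst hj; simp
      · simp [Function.update_of_ne hj]
    · intro x hx
      simp only [Finset.mem_filter, Finset.mem_univ, true_and] at hx ⊢
      simp [hx]
    · intro x hx
      simp only [Finset.mem_filter, Finset.mem_univ, true_and] at hx ⊢
      simp [hx]
  have htot : ((Finset.univ : Finset (Fin c → Bool)).filter (fun x => x i = true)).card +
      ((Finset.univ : Finset (Fin c → Bool)).filter (fun x => x i = false)).card = 2^c := by
    have := Finset.card_filter_add_card_filter_not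
      (s := (Finset.univ : Finset (Fin c → Bool))) (p := fun x => x i = true)
    have hneg : (Finset.univ : Finset (Fin c → Bool)).filter (fun x => ¬ x i = true) =
        (Finset.univ : Finset (Fin c → Bool)).filter (fun x => x i = false) := by
      apply Finset.filter_congr; intro x _; simp
    rw [hneg] at this
    rw [this, Finset.card_univ]
    simp
  have hst := hswap true
  simp only [Bool.not_true] at hst
  have h2 : 2 * ((Finset.univ : Finset (Fin c → Bool)).filter (fun x => x i = true)).card = 2^c := by
    rw [two_mul]
    rw [hst] at htot ⊢
    linarith [htot]
  have hpow : 2^c = 2 * 2^(c-1) := by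
    cases c with
    | zero => omega
    | succ n => rw [pow_succ]; simp [mul_comm]
  have hT : ((Finset.univ : Finset (Fin c → Bool)).filter (fun x => x i = true)).card = 2^(c-1) :=
    Nat.eq_of_mul_eq_mul_left (by norm_num) (h2.trans hpow)
  cases v
  · rw [← hst]; exact hT
  · exact hT

lemma time_inj_s11 (c : ℕ) (hc : 1 ≤ c) (b : Fin (2*c)) {j j' : Fin (2*c)}
    (h : time c b j = time c b j') : j = j' := by
  unfold time at h
  have hb : (b:ℕ) ≤ 2*c := le_of_lt b.isLt
  rw [Nat.add_sub_assoc hb, Nat.add_sub_assoc hb] at h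
  have h2 : (j:ℕ) ≡ (j':ℕ) [MOD 2*c] := Nat.ModEq.add_right_cancel' _ h
  have := h2.eq_of_lt_of_lt j.isLt j'.isLt
  exact Fin.ext this

lemma sum_warpingDegree (c : ℕ) (hc : 1 ≤ c) (w : Fin (2*c) → Fin c)
    (hw : IsGaussWord c w) (b : Fin (2*c)) :
    ∑ x : Fin c → Bool, warpingDegree c w x b = c * 2^(c-1) := by
  have hrow : ∀ x, warpingDegree c w x b =
      ∑ i : Fin c, if IsWarpingCrossing c w x b i then 1 else 0 := by
    intro x; rw [warpingDegree, Finset.card_filter]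
  simp_rw [hrow]
  rw [Finset.sum_comm]
  have hcol : ∀ i : Fin c,
      (∑ x : Fin c → Bool, if IsWarpingCrossing c w x b i then 1 else 0) = 2^(c-1) := by
    intro i
    obtain ⟨j₀, hj₀mem, hj₀min⟩ := Finset.exists_min_image
      (Finset.univ.filter (fun j => w j = i)) (time c b) (by
        rw [← Finset.card_pos, hw i]; norm_num)
    have hj₀mem' : j₀ ∈ Finset.univ.filter (fun j => w j = i) := hj₀mem
    simp only [Finset.mem_filter, Finset.mem_univ, true_and] at hj₀mem
    have hmin : ∀ j' : Fin (2*c), w j' = i → time c b j₀ ≤ time c b j' := by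
      intro j' hj'; exact hj₀min j' (by simp [hj'])
    have hiff : ∀ x, IsWarpingCrossing c w x b i ↔ (x i = true ↔ isFirst c w j₀) := by
      intro x
      constructor
      · rintro ⟨j, hji, hjmin, hju⟩
        have hej : j = j₀ := time_inj_s11 c hc b (le_antisymm (hjmin j₀ hj₀mem) (hmin j hji))
        subst hej
        rwa [passedUnder, hji] at hju
      · intro hx
        exact ⟨j₀, hj₀mem, hmin, by rwa [passedUnder, hj₀mem]⟩
    have heq : ∀ x : Fin c → Bool,
        (if IsWarpingCrossing c w x b i then (1:ℕ) else 0) =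
        (if x i = decide (isFirst c w j₀) then 1 else 0) := by
      intro x
      apply if_congr _ rfl rfl
      rw [hiff x]
      by_cases hP : isFirst c w j₀ <;> simp [hP]
    simp_rw [heq]
    rw [← Finset.card_filter]
    exact card_filter_eval c hc i _
  simp_rw [hcol]
  simp [mul_comm]
open scoped Classical in
/-- Deleting one row from the warping matrix loses no information: if the multisets of
warping degree sequences over all assignments except one coincide, then the deleted rows
coincide and so do the full warping matrices. -/
theorem deleted_row_recovery (c : ℕ) (hc : 1 ≤ c) (w₁ w₂ : Fin (2*c) → Fin c)
    (h₁ : IsGaussWord c w₁) (h₂ : IsGaussWord c w₂)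
    (x₀ x₁ : Fin c → Bool)
    (h : Multiset.map (fun x : Fin c → Bool => fun b => warpingDegree c w₁ x b)
          ((Finset.univ : Finset (Fin c → Bool)).erase x₀).val =
         Multiset.map (fun x : Fin c → Bool => fun b => warpingDegree c w₂ x b)
          ((Finset.univ : Finset (Fin c → Bool)).erase x₁).val) :
    (fun b => warpingDegree c w₁ x₀ b) = (fun b => warpingDegree c w₂ x₁ b) ∧
    Multiset.map (fun x : Fin c → Bool => fun b => warpingDegree c w₁ x b)
        (Finset.univ : Finset (Fin c → Bool)).val =
      Multiset.map (fun x : Fin c → Bool => fun b => warpingDegree c w₂ x b)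
        (Finset.univ : Finset (Fin c → Bool)).val := by
  have key : ∀ b : Fin (2*c), warpingDegree c w₁ x₀ b = warpingDegree c w₂ x₁ b := by
    intro b
    have hsum : ∑ x ∈ Finset.univ.erase x₀, warpingDegree c w₁ x b =
        ∑ x ∈ Finset.univ.erase x₁, warpingDegree c w₂ x b := by
      have := congrArg (fun m => (Multiset.map (fun f : Fin (2*c) → ℕ => f b) m).sum) h
      simp only [Multiset.map_map, Function.comp] at this
      exact this
    have e1 := Finset.add_sum_erase Finset.univ (fun x => warpingDegree c w₁ x b)
      (Finset.mem_univ x₀)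
    have e2 := Finset.add_sum_erase Finset.univ (fun x => warpingDegree c w₂ x b)
      (Finset.mem_univ x₁)
    have s1 := sum_warpingDegree c hc w₁ h₁ b
    have s2 := sum_warpingDegree c hc w₂ h₂ b
    omega
  have hfun : (fun b => warpingDegree c w₁ x₀ b) = (fun b => warpingDegree c w₂ x₁ b) :=
    funext key
  refine ⟨hfun, ?_⟩
  have m1 : (Finset.univ : Finset (Fin c → Bool)).val =
      x₀ ::ₘ ((Finset.univ : Finset (Fin c → Bool)).erase x₀).val := by
    rw [Finset.erase_val]
    exact (Multiset.cons_erase (Finset.mem_univ x₀)).symm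
  have m2 : (Finset.univ : Finset (Fin c → Bool)).val =
      x₁ ::ₘ ((Finset.univ : Finset (Fin c → Bool)).erase x₁).val := by
    rw [Finset.erase_val]
    exact (Multiset.cons_erase (Finset.mem_univ x₁)).symm
  conv_lhs => rw [m1]
  conv_rhs => rw [m2]
  rw [Multiset.map_cons, Multiset.map_cons, h, hfun]


end Warping
end

section
/- Every 8 × 6 matrix M : Fin 8 → Fin 6 → ℕ satisfying the warping-matrix rules for c = 3 is equivalent, up to a permutation of rows, a cyclic permutation of columns, and possibly reversing the cyclic order of columns, to exactly one of the following three matrices: the matrix with rows (0,1,2,3,2,1), (1,0,1,2,3,2), (1,2,1,2,1,2), (1,2,3,2,1,0), (2,1,0,1,2,3), (2,1,2,1,2,1), (2,3,2,1,0,1), (3,2,1,0,1,2); the matrix with rows (0,1,2,3,2,1), (1,0,1,2,1,0), (1,2,1,2,1,2), (1,2,3,2,3,2), (2,1,0,1,0,1), (2,3,2,1,2,3), (2,1,2,1,2,1), (3,2,1,0,1,2); or the matrix with rows (0,1,2,1,2,1), (1,0,1,0,1,0), (1,2,1,2,3,2), (1,2,3,2,1,2), (2,1,0,1,2,1), (2,3,2,3,2,3),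 (2,1,2,1,0,1), (3,2,1,2,1,2). -/
namespace Warping

/-- Cyclic shift of the columns by `t`. -/
def colShift (c : ℕ) (t : ℕ) (j : Fin (2*c)) : Fin (2*c) :=
  ⟨((j : ℕ) + t) % (2*c), Nat.mod_lt _ (Nat.lt_of_le_of_lt (Nat.zero_le _) j.isLt)⟩

/-- Reversal of the cyclic order of the columns (composed with a cyclic shift by `t`). -/
def colRev (c : ℕ) (t : ℕ) (j : Fin (2*c)) : Fin (2*c) :=
  ⟨(t + 2*c - (j : ℕ)) % (2*c), Nat.mod_lt _ (Nat.lt_of_le_of_lt (Nat.zero_le _) j.isLt)⟩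

/-- A row of one of the alternating forms `(k, k+1, k, k+1, …, k+1)` or
`(l, l-1, l, l-1, …, l-1)`. -/
def AltRow (c : ℕ) (r : Fin (2*c) → ℕ) : Prop :=
  (∃ k : ℕ, ∀ j : Fin (2*c), (r j : ℤ) = k + (j : ℕ) % 2) ∨
  (∃ l : ℕ, ∀ j : Fin (2*c), (r j : ℤ) = l - (j : ℕ) % 2)

/-- The warping-matrix rules (i)–(iv) for a `2^c × 2c` matrix:
(i) cyclically consecutive entries of every row differ by exactly one;
(ii) in each column the value `n` appears exactly `c.choose n` times;
(iii) there is a unique partition of the `2^c` rows into `2^(c-1)` disjoint pairs such that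
the two rows of each pair sum entrywise to the constant row `(c, c, …, c)`;
(iv) there are exactly two rows of the alternating forms `(k, k+1, k, k+1, …)` and
`(l, l-1, l, l-1, …)`, and for these `k + l = c`. -/
def WarpingRules (c : ℕ) (M : Fin (2^c) → Fin (2*c) → ℕ) : Prop :=
  (∀ i j, |(M i (next j) : ℤ) - (M i j : ℤ)| = 1) ∧
  (∀ j : Fin (2*c), ∀ n : ℕ, n ≤ c →
      (Finset.univ.filter (fun i => M i j = n)).card = Nat.choose c n) ∧
  (∃! P : Finset (Finset (Fin (2^c))),
      P.card = 2^(c-1) ∧ (∀ p ∈ P, p.card = 2) ∧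
      (∀ i : Fin (2^c), ∃! p, p ∈ P ∧ i ∈ p) ∧
      (∀ p ∈ P, ∀ i ∈ p, ∀ i' ∈ p, i ≠ i' → ∀ j, M i j + M i' j = c)) ∧
  (∃ i₀ i₁ : Fin (2^c), ∃ k l : ℕ, i₀ ≠ i₁ ∧ k + l = c ∧
      (∀ j : Fin (2*c), (M i₀ j : ℤ) = k + (j : ℕ) % 2) ∧
      (∀ j : Fin (2*c), (M i₁ j : ℤ) = l - (j : ℕ) % 2) ∧
      (∀ i, AltRow c (M i) → i = i₀ ∨ i = i₁))

/-- Equivalence of `2^c × 2c` matrices up to a permutation of rows, a cyclic permutation of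
columns, and possibly reversing the cyclic order of the columns. -/
def MatEquiv (c : ℕ) (M N : Fin (2^c) → Fin (2*c) → ℕ) : Prop :=
  ∃ σ : Equiv.Perm (Fin (2^c)), ∃ t : ℕ,
    (∀ i j, M i j = N (σ i) (colShift c t j)) ∨ (∀ i j, M i j = N (σ i) (colRev c t j))


/-- The first of the three warping matrices for `c = 3`. -/
def mat3A : Fin (2^3) → Fin (2*3) → ℕ :=
  ![![0,1,2,3,2,1], ![1,0,1,2,3,2], ![1,2,1,2,1,2], ![1,2,3,2,1,0],
    ![2,1,0,1,2,3], ![2,1,2,1,2,1], ![2,3,2,1,0,1], ![3,2,1,0,1,2]]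

/-- The second of the three warping matrices for `c = 3`. -/
def mat3B : Fin (2^3) → Fin (2*3) → ℕ :=
  ![![0,1,2,3,2,1], ![1,0,1,2,1,0], ![1,2,1,2,1,2], ![1,2,3,2,3,2],
    ![2,1,0,1,0,1], ![2,3,2,1,2,3], ![2,1,2,1,2,1], ![3,2,1,0,1,2]]

/-- The third of the three warping matrices for `c = 3`. -/
def mat3C : Fin (2^3) → Fin (2*3) → ℕ :=
  ![![0,1,2,1,2,1], ![1,0,1,0,1,0], ![1,2,1,2,3,2], ![1,2,3,2,1,2],
    ![2,1,0,1,2,1], ![2,3,2,3,2,3], ![2,1,2,1,0,1], ![3,2,1,2,1,2]]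

/-! ### Auxiliary machinery -/

/-- Encoding of a row as a natural number (base 4). -/
def enc (r : Fin 6 → ℕ) : ℕ := r 0 + 4*r 1 + 16*r 2 + 64*r 3 + 256*r 4 + 1024*r 5

/-- Decoding. -/
def decRow (c : ℕ) : Fin 6 → ℕ := fun j => c / 4 ^ (j : ℕ) % 4

/-- The codes of the 36 valid rows. -/
def codes36 : List ℕ := [273, 281, 401, 409, 441, 1092, 1094, 1124, 1126, 1134,
  1604, 1606, 1636, 1638, 1646, 1764, 1766, 1774, 2321, 2329, 2331, 2449, 2457, 2459,
  2489, 2491, 2961, 2969, 2971, 3001, 3003, 3654, 3686, 3694, 3814, 3822]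

/-- Codes of valid rows whose complementary row has a larger code. -/
def codesLow : List ℕ := [273, 281, 401, 409, 441, 1092, 1094, 1124, 1126, 1134,
  1604, 1606, 1636, 1638, 1646, 1764, 1766, 1774]

def ind (j n c : ℕ) : ℕ := if c / 4^j % 4 = n then 1 else 0

def altind (c : ℕ) : ℕ :=
  if c = 273 ∨ c = 1092 ∨ c = 1638 ∨ c = 2457 ∨ c = 3003 ∨ c = 3822 then 1 else 0

def bnd (n : ℕ) : ℕ := if n = 0 ∨ n = 3 then 1 else 3

def cols : List ℕ := [0,1,2,3,4,5]
def vals : List ℕ := [0,1,2,3]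

def pl (c : ℕ) : List ℕ := [c, 4095 - c]

def fullL (c0 c1 c2 c3 : ℕ) : List ℕ := [c0,c1,c2,c3,4095-c3,4095-c2,4095-c1,4095-c0]

def feas (l : List ℕ) : Prop := ∀ j ∈ cols, ∀ n ∈ vals, (l.map (ind j n)).sum ≤ bnd n

instance (l : List ℕ) : Decidable (feas l) := by unfold feas; infer_instance

/-- Sorted list of the row codes of a matrix. -/
def sortEnc (N : Fin (2^3) → Fin (2*3) → ℕ) : List ℕ :=
  List.insertionSort (· ≤ ·) (List.ofFn (fun i => enc (N i)))

/-- The twelve sorted code lists of the column-operation images of a matrix. -/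
def gList (N : Fin (2^3) → Fin (2*3) → ℕ) : List (List ℕ) :=
  ((List.range 6).map fun t => sortEnc fun i j => N i (colShift 3 t j)) ++
  ((List.range 6).map fun t => sortEnc fun i j => N i (colRev 3 t j))

theorem rows36 : ∀ a b c d e f : Fin 4,
    ((b:ℕ) = a + 1 ∨ (a:ℕ) = b + 1) → ((c:ℕ) = b + 1 ∨ (b:ℕ) = c + 1) →
    ((d:ℕ) = c + 1 ∨ (c:ℕ) = d + 1) → ((e:ℕ) = d + 1 ∨ (d:ℕ) = e + 1) →
    ((f:ℕ) = e + 1 ∨ (e:ℕ) = f + 1) → ((a:ℕ) = f + 1 ∨ (f:ℕ) = a + 1) →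
    ((a:ℕ) + 4*(b:ℕ) + 16*(c:ℕ) + 64*(d:ℕ) + 256*(e:ℕ) + 1024*(f:ℕ)) ∈ codes36 := by
  decide

set_option maxRecDepth 10000 in
theorem mainSearch : ∀ c0 ∈ codesLow, feas (pl c0) →
    ∀ c1 ∈ codesLow, c0 ≤ c1 → feas (pl c0 ++ pl c1) →
    ∀ c2 ∈ codesLow, c1 ≤ c2 → feas (pl c0 ++ pl c1 ++ pl c2) →
    ∀ c3 ∈ codesLow, c2 ≤ c3 →
    (∀ j ∈ cols, ∀ n ∈ vals, ((fullL c0 c1 c2 c3).map (ind j n)).sum = bnd n) →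
    ((fullL c0 c1 c2 c3).map altind).sum = 2 →
    fullL c0 c1 c2 c3 ∈ gList mat3A ∨ fullL c0 c1 c2 c3 ∈ gList mat3B ∨
      fullL c0 c1 c2 c3 ∈ gList mat3C := by
  decide

theorem disjAB : ∀ x ∈ gList mat3A, x ∉ gList mat3B := by decide
theorem disjAC : ∀ x ∈ gList mat3A, x ∉ gList mat3C := by decide
theorem disjBC : ∀ x ∈ gList mat3B, x ∉ gList mat3C := by decide

theorem boundA : ∀ i j, mat3A i j ≤ 3 := by decide
theorem boundB : ∀ i j, mat3B i j ≤ 3 := by decide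
theorem boundC : ∀ i j, mat3C i j ≤ 3 := by decide

theorem c36_le : ∀ x ∈ codes36, x ≤ 4095 := by decide

theorem mem_low : ∀ x ∈ codes36, x < 2048 → x ∈ codesLow := by decide

lemma dd {a b c d e f : ℕ} (ha : a ≤ 3) (hb : b ≤ 3) (hc : c ≤ 3) (hd : d ≤ 3)
    (he : e ≤ 3) (hf : f ≤ 3) :
    (a+4*b+16*c+64*d+256*e+1024*f) / 1 % 4 = a ∧
    (a+4*b+16*c+64*d+256*e+1024*f) / 4 % 4 = b ∧
    (a+4*b+16*c+64*d+256*e+1024*f) / 16 % 4 = c ∧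
    (a+4*b+16*c+64*d+256*e+1024*f) / 64 % 4 = d ∧
    (a+4*b+16*c+64*d+256*e+1024*f) / 256 % 4 = e ∧
    (a+4*b+16*c+64*d+256*e+1024*f) / 1024 % 4 = f := by
  omega

lemma dec_enc {r : Fin (2*3) → ℕ} (h : ∀ j, r j ≤ 3) : decRow (enc r) = r := by
  have D := dd (h 0) (h 1) (h 2) (h 3) (h 4) (h 5)
  funext j
  fin_cases j
  · exact D.1
  · exact D.2.1
  · exact D.2.2.1
  · exact D.2.2.2.1
  · exact D.2.2.2.2.1
  · exact D.2.2.2.2.2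

lemma enc_le {r : Fin (2*3) → ℕ} (h : ∀ j, r j ≤ 3) : enc r ≤ 4095 := by
  have h0 := h 0; have h1 := h 1; have h2 := h 2
  have h3 := h 3; have h4 := h 4; have h5 := h 5
  simp only [enc]; omega

lemma enc_comp {r r' : Fin (2*3) → ℕ} (h : ∀ j, r j + r' j = 3) :
    enc r + enc r' = 4095 := by
  have h0 := h 0; have h1 := h 1; have h2 := h 2
  have h3 := h 3; have h4 := h 4; have h5 := h 5
  simp only [enc]; omega

lemma alt_of_code {r : Fin (2*3) → ℕ} (hb : ∀ j, r j ≤ 3)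
    (hc : enc r = 273 ∨ enc r = 1092 ∨ enc r = 1638 ∨ enc r = 2457 ∨
      enc r = 3003 ∨ enc r = 3822) : AltRow 3 r := by
  have hv : ∀ j : Fin (2*3), r j = enc r / 4 ^ (j:ℕ) % 4 :=
    fun j => (congrFun (dec_enc hb) j).symm
  rcases hc with h|h|h|h|h|h
  · refine Or.inr ⟨1, fun j => ?_⟩
    have hj := hv j; rw [h] at hj
    fin_cases j <;> norm_num at hj ⊢ <;> omega
  · refine Or.inl ⟨0, fun j => ?_⟩
    have hj := hv j; rw [h] at hj
    fin_cases j <;> norm_num at hj ⊢ <;> omega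
  · refine Or.inr ⟨2, fun j => ?_⟩
    have hj := hv j; rw [h] at hj
    fin_cases j <;> norm_num at hj ⊢ <;> omega
  · refine Or.inl ⟨1, fun j => ?_⟩
    have hj := hv j; rw [h] at hj
    fin_cases j <;> norm_num at hj ⊢ <;> omega
  · refine Or.inr ⟨3, fun j => ?_⟩
    have hj := hv j; rw [h] at hj
    fin_cases j <;> norm_num at hj ⊢ <;> omega
  · refine Or.inl ⟨2, fun j => ?_⟩
    have hj := hv j; rw [h] at hj
    fin_cases j <;> norm_num at hj ⊢ <;> omega

lemma pair_step {K a b : ℕ} {m : Multiset ℕ} (hab : a ≤ b) (hbK : b ≤ K)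
    (hmem : ∀ x ∈ m, a ≤ x ∧ x ≤ b)
    (hsym : ∀ c ≤ K, (a ::ₘ b ::ₘ m).count c = (a ::ₘ b ::ₘ m).count (K - c)) :
    a + b = K ∧ ∀ c ≤ K, m.count c = m.count (K - c) := by
  have haK : a ≤ K := le_trans hab hbK
  have hub : ∀ x ∈ a ::ₘ b ::ₘ m, a ≤ x ∧ x ≤ b := by
    intro x hx
    rcases Multiset.mem_cons.mp hx with h | hx
    · omega
    rcases Multiset.mem_cons.mp hx with h | hx
    · omega
    · exact hmem x hx
  have h1 : K - a ∈ a ::ₘ b ::ₘ m := by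
    rw [← Multiset.count_pos, ← hsym a haK]
    simp
  have h2 : K - b ∈ a ::ₘ b ::ₘ m := by
    rw [← Multiset.count_pos, ← hsym b hbK, Multiset.count_pos]
    simp
  have u1 := hub _ h1
  have u2 := hub _ h2
  have hKab : a + b = K := by omega
  refine ⟨hKab, ?_⟩
  intro c hc
  have hs := hsym c hc
  simp only [Multiset.count_cons] at hs
  split_ifs at hs <;> omega

lemma exists_row_perm {α : Type*} [DecidableEq α] {n : ℕ} {f g : Fin n → α}
    (h : Finset.univ.val.map f = Finset.univ.val.map g) :
    ∃ σ : Equiv.Perm (Fin n), ∀ i, f i = g (σ i) := by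
  have key : ∀ (p : Fin n → Prop) [DecidablePred p],
      (Finset.univ.filter p).card = Multiset.card (Finset.univ.val.filter p) := by
    intro p _; rfl
  have hfib : ∀ a, Fintype.card {i // f i = a} = Fintype.card {i // g i = a} := by
    intro a
    rw [Fintype.card_subtype, Fintype.card_subtype, key, key]
    have hcc := congrArg (Multiset.count a) h
    rw [Multiset.count_map, Multiset.count_map] at hcc
    have e1 : Finset.univ.val.filter (fun i => f i = a) =
        Finset.univ.val.filter (fun i => a = f i) :=
      Multiset.filter_congr (fun x _ => eq_comm)
    have e2 : Finset.univ.val.filter (fun i => g i = a) =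
        Finset.univ.val.filter (fun i => a = g i) :=
      Multiset.filter_congr (fun x _ => eq_comm)
    rw [e1, e2, hcc]
  refine ⟨Equiv.ofFiberEquiv (fun a => Fintype.equivOfCardEq (hfib a)), fun i => ?_⟩
  exact (Equiv.ofFiberEquiv_map (fun a => Fintype.equivOfCardEq (hfib a)) i).symm

lemma perm_rows_of_sortEnc {M N : Fin (2^3) → Fin (2*3) → ℕ}
    (hMb : ∀ i j, M i j ≤ 3) (hNb : ∀ i j, N i j ≤ 3)
    (h : sortEnc M = sortEnc N) :
    ∃ σ : Equiv.Perm (Fin (2^3)), ∀ i, M i = N (σ i) := by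
  have hperm : (List.ofFn fun i => enc (M i)).Perm (List.ofFn fun i => enc (N i)) := by
    have hp1 : (sortEnc M).Perm (List.ofFn fun i => enc (M i)) :=
      List.perm_insertionSort _ _
    have hp2 : (sortEnc N).Perm (List.ofFn fun i => enc (N i)) :=
      List.perm_insertionSort _ _
    rw [h] at hp1
    exact hp1.symm.trans hp2
  have hcm : Finset.univ.val.map (fun i => enc (M i)) =
      Finset.univ.val.map (fun i => enc (N i)) := by
    rw [Fin.univ_val_map, Fin.univ_val_map]
    exact Multiset.coe_eq_coe.mpr hperm
  have hrm : Finset.univ.val.map M = Finset.univ.val.map N := by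
    have h2 := congrArg (Multiset.map decRow) hcm
    rw [Multiset.map_map, Multiset.map_map] at h2
    have e1 : Multiset.map (decRow ∘ fun i => enc (M i)) Finset.univ.val =
        Finset.univ.val.map M :=
      Multiset.map_congr rfl (fun x _ => dec_enc (hMb x))
    have e2 : Multiset.map (decRow ∘ fun i => enc (N i)) Finset.univ.val =
        Finset.univ.val.map N :=
      Multiset.map_congr rfl (fun x _ => dec_enc (hNb x))
    rw [e1, e2] at h2
    exact h2
  exact exists_row_perm hrm

lemma equiv_of_mem {M N : Fin (2^3) → Fin (2*3) → ℕ}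
    (hMb : ∀ i j, M i j ≤ 3) (hNb : ∀ i j, N i j ≤ 3)
    (h : sortEnc M ∈ gList N) : MatEquiv 3 M N := by
  rcases List.mem_append.mp h with hmem | hmem <;>
    obtain ⟨t, _, heq⟩ := List.mem_map.mp hmem
  · obtain ⟨σ, hσ⟩ := perm_rows_of_sortEnc hMb
      (fun i j => hNb i (colShift 3 t j)) heq.symm
    exact ⟨σ, t, Or.inl fun i j => congrFun (hσ i) j⟩
  · obtain ⟨σ, hσ⟩ := perm_rows_of_sortEnc hMb
      (fun i j => hNb i (colRev 3 t j)) heq.symm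
    exact ⟨σ, t, Or.inr fun i j => congrFun (hσ i) j⟩

lemma sortEnc_comp_perm (N : Fin (2^3) → Fin (2*3) → ℕ) (σ : Equiv.Perm (Fin (2^3))) :
    sortEnc (fun i => N (σ i)) = sortEnc N := by
  apply List.Perm.eq_of_pairwise' (List.pairwise_insertionSort _ _)
    (List.pairwise_insertionSort _ _) ?_
  refine (List.perm_insertionSort _ _).trans
    (List.Perm.trans ?_ (List.perm_insertionSort _ _).symm)
  rw [← Multiset.coe_eq_coe, ← Fin.univ_val_map, ← Fin.univ_val_map]
  have : (Finset.univ.val.map σ) = Finset.univ.val := Multiset.map_univ_val_equiv σ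
  conv_rhs => rw [← this]
  rw [Multiset.map_map]
  rfl

lemma mem_of_equiv {M N : Fin (2^3) → Fin (2*3) → ℕ}
    (h : MatEquiv 3 M N) : sortEnc M ∈ gList N := by
  obtain ⟨σ, t, hc | hc⟩ := h
  · have hop : ∀ j : Fin (2*3), colShift 3 t j = colShift 3 (t % 6) j := by
      intro j
      apply Fin.ext
      show ((j:ℕ) + t) % 6 = ((j:ℕ) + t % 6) % 6
      omega
    have hMN : M = fun i => (fun i' j => N i' (colShift 3 (t % 6) j)) (σ i) := by
      funext i j
      rw [hc i j, hop j]
    have : sortEnc M = sortEnc (fun i j => N i (colShift 3 (t % 6) j)) := by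
      rw [hMN]
      exact sortEnc_comp_perm (fun i' j => N i' (colShift 3 (t % 6) j)) σ
    rw [this]
    exact List.mem_append.mpr (Or.inl (List.mem_map.mpr
      ⟨t % 6, List.mem_range.mpr (by omega), rfl⟩))
  · have hop : ∀ j : Fin (2*3), colRev 3 t j = colRev 3 (t % 6) j := by
      intro j
      apply Fin.ext
      have hj : (j:ℕ) < 6 := j.isLt
      show (t + 6 - (j:ℕ)) % 6 = (t % 6 + 6 - (j:ℕ)) % 6
      omega
    have hMN : M = fun i => (fun i' j => N i' (colRev 3 (t % 6) j)) (σ i) := by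
      funext i j
      rw [hc i j, hop j]
    have : sortEnc M = sortEnc (fun i j => N i (colRev 3 (t % 6) j)) := by
      rw [hMN]
      exact sortEnc_comp_perm (fun i' j => N i' (colRev 3 (t % 6) j)) σ
    rw [this]
    exact List.mem_append.mpr (Or.inr (List.mem_map.mpr
      ⟨t % 6, List.mem_range.mpr (by omega), rfl⟩))

lemma list8 {l : List ℕ} (h : l.length = 8) :
    ∃ a b c d e f g h', l = [a,b,c,d,e,f,g,h'] := by
  rcases l with _|⟨a, _|⟨b, _|⟨c, _|⟨d, _|⟨e, _|⟨f, _|⟨g, _|⟨h', _|⟨i, l⟩⟩⟩⟩⟩⟩⟩⟩⟩ <;>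
    simp_all

/-- Every `8 × 6` matrix satisfying the warping-matrix rules for `c = 3` is equivalent to
exactly one of the three matrices `mat3A`, `mat3B`, `mat3C`. -/
theorem warpingRules_three (M : Fin (2^3) → Fin (2*3) → ℕ) (hM : WarpingRules 3 M) :
    (MatEquiv 3 M mat3A ∧ ¬ MatEquiv 3 M mat3B ∧ ¬ MatEquiv 3 M mat3C) ∨
    (¬ MatEquiv 3 M mat3A ∧ MatEquiv 3 M mat3B ∧ ¬ MatEquiv 3 M mat3C) ∨
    (¬ MatEquiv 3 M mat3A ∧ ¬ MatEquiv 3 M mat3B ∧ MatEquiv 3 M mat3C) := by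
  obtain ⟨hadj, hcnt, hPex, hAltEx⟩ := hM
  -- Step 1: all entries are at most 3.
  have hle : ∀ i j, M i j ≤ 3 := by
    intro i j
    have h0 := hcnt j 0 (by norm_num)
    have h1 := hcnt j 1 (by norm_num)
    have h2 := hcnt j 2 (by norm_num)
    have h3 := hcnt j 3 (by norm_num)
    have hU : Finset.univ.filter (fun i' => M i' j ≤ 3) =
        ((Finset.univ.filter (fun i' => M i' j = 0) ∪
          Finset.univ.filter (fun i' => M i' j = 1)) ∪
          Finset.univ.filter (fun i' => M i' j = 2)) ∪
          Finset.univ.filter (fun i' => M i' j = 3) := by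
      ext x; simp; omega
    have d1 : Disjoint (Finset.univ.filter (fun i' => M i' j = 0))
        (Finset.univ.filter (fun i' => M i' j = 1)) := by
      simp only [Finset.disjoint_left, Finset.mem_filter, Finset.mem_univ, true_and]
      intro a ha hb; omega
    have d2 : Disjoint (Finset.univ.filter (fun i' => M i' j = 0) ∪
        Finset.univ.filter (fun i' => M i' j = 1))
        (Finset.univ.filter (fun i' => M i' j = 2)) := by
      simp only [Finset.disjoint_left, Finset.mem_union, Finset.mem_filter,
        Finset.mem_univ, true_and]
      intro a ha hb; omega
    have d3 : Disjoint ((Finset.univ.filter (fun i' => M i' j = 0) ∪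
        Finset.univ.filter (fun i' => M i' j = 1)) ∪
        Finset.univ.filter (fun i' => M i' j = 2))
        (Finset.univ.filter (fun i' => M i' j = 3)) := by
      simp only [Finset.disjoint_left, Finset.mem_union, Finset.mem_filter,
        Finset.mem_univ, true_and]
      intro a ha hb; omega
    have hcard : (Finset.univ.filter (fun i' => M i' j ≤ 3)).card = 8 := by
      rw [hU, Finset.card_union_of_disjoint d3, Finset.card_union_of_disjoint d2,
        Finset.card_union_of_disjoint d1, h0, h1, h2, h3]
      rfl
    have hTuniv : Finset.univ.filter (fun i' => M i' j ≤ 3) = Finset.univ := by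
      apply (Finset.card_eq_iff_eq_univ _).mp
      rw [hcard]; rfl
    have : i ∈ Finset.univ.filter (fun i' => M i' j ≤ 3) := by
      rw [hTuniv]; exact Finset.mem_univ i
    exact (Finset.mem_filter.mp this).2
  -- Step 2: row adjacency in ℕ form, and row codes.
  have hadjN : ∀ i (j : Fin (2*3)), M i (next j) = M i j + 1 ∨ M i j = M i (next j) + 1 := by
    intro i j
    have h := hadj i j
    have := (abs_eq (by norm_num : (0:ℤ) ≤ 1)).mp h
    omega
  have hcode : ∀ i, enc (M i) ∈ codes36 := by
    intro i
    have a0 := hadjN i ⟨0, by norm_num⟩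
    have a1 := hadjN i ⟨1, by norm_num⟩
    have a2 := hadjN i ⟨2, by norm_num⟩
    have a3 := hadjN i ⟨3, by norm_num⟩
    have a4 := hadjN i ⟨4, by norm_num⟩
    have a5 := hadjN i ⟨5, by norm_num⟩
    exact rows36 ⟨M i ⟨0, by norm_num⟩, Nat.lt_succ_of_le (hle i _)⟩
      ⟨M i ⟨1, by norm_num⟩, Nat.lt_succ_of_le (hle i _)⟩
      ⟨M i ⟨2, by norm_num⟩, Nat.lt_succ_of_le (hle i _)⟩
      ⟨M i ⟨3, by norm_num⟩, Nat.lt_succ_of_le (hle i _)⟩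
      ⟨M i ⟨4, by norm_num⟩, Nat.lt_succ_of_le (hle i _)⟩
      ⟨M i ⟨5, by norm_num⟩, Nat.lt_succ_of_le (hle i _)⟩
      a0 a1 a2 a3 a4 a5
  -- Step 3: the pairing involution τ.
  obtain ⟨P, ⟨hPcard, hp2, hmemu, hsum⟩, -⟩ := hPex
  choose pf hpf using fun i => (hmemu i).exists
  have pf_eq : ∀ i q, q ∈ P → i ∈ q → q = pf i :=
    fun i q hq hiq => (hmemu i).unique ⟨hq, hiq⟩ (hpf i)
  choose xx yy hxy hpair using fun i => Finset.card_eq_two.mp (hp2 (pf i) (hpf i).1)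
  set τ : Fin (2^3) → Fin (2^3) := fun i => if i = xx i then yy i else xx i with hτdef
  have hiτ : ∀ i, i ∈ pf i := fun i => (hpf i).2
  have hτmem : ∀ i, τ i ∈ pf i := by
    intro i
    rw [hpair i]
    simp only [hτdef]
    by_cases h : i = xx i
    · rw [if_pos h]
      exact Finset.mem_insert_of_mem (Finset.mem_singleton_self _)
    · rw [if_neg h]
      exact Finset.mem_insert_self _ _
  have hτne : ∀ i, τ i ≠ i := by
    intro i
    simp only [hτdef]
    by_cases h : i = xx i
    · rw [if_pos h]
      exact fun e => hxy i (e.trans h).symm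
    · rw [if_neg h]
      exact fun e => h e.symm
  have hpfτ : ∀ i, pf (τ i) = pf i :=
    fun i => (pf_eq (τ i) (pf i) (hpf i).1 (hτmem i)).symm
  have hτsum : ∀ i j, M i j + M (τ i) j = 3 :=
    fun i j => hsum (pf i) (hpf i).1 i (hiτ i) (τ i) (hτmem i) (hτne i).symm j
  have hτinv : ∀ i, τ (τ i) = i := by
    intro i
    have h1 : τ (τ i) ∈ pf i := by rw [← hpfτ i]; exact hτmem (τ i)
    have h2 : τ (τ i) ≠ τ i := hτne (τ i)
    have h3 : i ∈ pf i := hiτ i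
    have h4 : τ i ∈ pf i := hτmem i
    have h5 : i ≠ τ i := (hτne i).symm
    rw [hpair i] at h1 h3 h4
    simp only [Finset.mem_insert, Finset.mem_singleton] at h1 h3 h4
    rcases h1 with h1|h1 <;> rcases h4 with h4|h4 <;> rcases h3 with h3|h3
    · exact absurd (h1.trans h4.symm) h2
    · exact absurd (h1.trans h4.symm) h2
    · exact h1.trans h3.symm
    · exact absurd (h3.trans h4.symm) h5
    · exact absurd (h3.trans h4.symm) h5
    · exact h1.trans h3.symm
    · exact absurd (h1.trans h4.symm) h2
    · exact absurd (h1.trans h4.symm) h2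
  -- Step 4: the code multiset and its symmetry.
  set s : Multiset ℕ := Finset.univ.val.map (fun i => enc (M i)) with hs
  have hs_elem : ∀ x ∈ s, x ∈ codes36 := by
    intro x hx
    obtain ⟨i, _, rfl⟩ := Multiset.mem_map.mp hx
    exact hcode i
  have hmap_comp : s = s.map (fun x => 4095 - x) := by
    conv_lhs => rw [hs, ← Multiset.map_univ_val_equiv ⟨τ, τ, hτinv, hτinv⟩]
    rw [hs, Multiset.map_map, Multiset.map_map]
    refine Multiset.map_congr rfl (fun i _ => ?_)
    have hcc := enc_comp (r := M i) (r' := M (τ i)) (fun j => hτsum i j)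
    show enc (M (τ i)) = 4095 - enc (M i)
    omega
  have hsymm : ∀ c ≤ 4095, s.count c = s.count (4095 - c) := by
    intro c hc
    conv_lhs => rw [hmap_comp]
    rw [Multiset.count_map, Multiset.count_eq_card_filter_eq]
    congr 1
    refine Multiset.filter_congr (fun x hx => ?_)
    have hx4 : x ≤ 4095 := c36_le x (hs_elem x hx)
    constructor <;> intro h <;> omega
  -- Step 5: column counts and alternating-row count, in list form.
  have hperm : (sortEnc M).Perm (List.ofFn fun i => enc (M i)) :=
    List.perm_insertionSort _ _
  have hcoe : ((sortEnc M : List ℕ) : Multiset ℕ) = s := by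
    rw [Multiset.coe_eq_coe.mpr hperm, ← Fin.univ_val_map, hs]
  have h8 : ∀ j ∈ cols, ∀ n ∈ vals, ((sortEnc M).map (ind j n)).sum = bnd n := by
    intro j hj n hn
    have hj6 : j < 6 := by
      simp only [cols, List.mem_cons, List.not_mem_nil, or_false] at hj
      omega
    have hn3 : n ≤ 3 := by
      simp only [vals, List.mem_cons, List.not_mem_nil, or_false] at hn
      omega
    rw [(hperm.map (ind j n)).sum_eq, List.map_ofFn, List.sum_ofFn]
    have hsummand : ∀ i, (ind j n ∘ fun i => enc (M i)) i =
        if M i ⟨j, hj6⟩ = n then 1 else 0 := by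
      intro i
      have hd := congrFun (dec_enc (fun j' => hle i j')) ⟨j, hj6⟩
      simp only [Function.comp, ind]
      rw [show enc (M i) / 4 ^ j % 4 = decRow (enc (M i)) ⟨j, hj6⟩ from rfl, hd]
    rw [Finset.sum_congr rfl (fun i _ => hsummand i)]
    have : ∑ i : Fin (2^3), (if M i ⟨j, hj6⟩ = n then 1 else 0) =
        (Finset.univ.filter (fun i => M i ⟨j, hj6⟩ = n)).card := by
      simp [Finset.sum_boole]
    rw [this, hcnt ⟨j, hj6⟩ n hn3]
    simp only [vals, List.mem_cons, List.not_mem_nil, or_false] at hn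
    rcases hn with rfl|rfl|rfl|rfl <;> rfl
  -- the alternating rows
  obtain ⟨i₀, i₁, k, l, hne01, hkl, hf0, hf1, honly⟩ := hAltEx
  have hk2 : k ≤ 2 := by
    have h := hf0 ((1 : Fin 6))
    have hb := hle i₀ ((1 : Fin 6))
    simp only [show ((0:Fin 6):ℕ) = 0 from rfl, show ((1:Fin 6):ℕ) = 1 from rfl,
      show ((2:Fin 6):ℕ) = 2 from rfl, show ((3:Fin 6):ℕ) = 3 from rfl,
      show ((4:Fin 6):ℕ) = 4 from rfl, show ((5:Fin 6):ℕ) = 5 from rfl] at h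
    norm_num at h
    omega
  have hv0 : ∀ j : Fin (2*3), M i₀ j = k + (j:ℕ) % 2 := by
    intro j; have := hf0 j; omega
  have hv1 : ∀ j : Fin (2*3), M i₁ j + (j:ℕ) % 2 = l := by
    intro j; have := hf1 j; omega
  have hcode0 : enc (M i₀) = 1365 * k + 1092 := by
    have h0 := hv0 ((0 : Fin 6)); have h1 := hv0 ((1 : Fin 6))
    have h2 := hv0 ((2 : Fin 6)); have h3 := hv0 ((3 : Fin 6))
    have h4 := hv0 ((4 : Fin 6)); have h5 := hv0 ((5 : Fin 6))
    simp only [show ((0:Fin 6):ℕ) = 0 from rfl, show ((1:Fin 6):ℕ) = 1 from rfl,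
      show ((2:Fin 6):ℕ) = 2 from rfl, show ((3:Fin 6):ℕ) = 3 from rfl,
      show ((4:Fin 6):ℕ) = 4 from rfl, show ((5:Fin 6):ℕ) = 5 from rfl] at h0 h1 h2 h3 h4 h5
    norm_num at h0 h1 h2 h3 h4 h5
    simp only [enc]
    omega
  have hcode1 : enc (M i₁) + 1092 = 1365 * l := by
    have h0 := hv1 ((0 : Fin 6)); have h1 := hv1 ((1 : Fin 6))
    have h2 := hv1 ((2 : Fin 6)); have h3 := hv1 ((3 : Fin 6))
    have h4 := hv1 ((4 : Fin 6)); have h5 := hv1 ((5 : Fin 6))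
    simp only [show ((0:Fin 6):ℕ) = 0 from rfl, show ((1:Fin 6):ℕ) = 1 from rfl,
      show ((2:Fin 6):ℕ) = 2 from rfl, show ((3:Fin 6):ℕ) = 3 from rfl,
      show ((4:Fin 6):ℕ) = 4 from rfl, show ((5:Fin 6):ℕ) = 5 from rfl] at h0 h1 h2 h3 h4 h5
    norm_num at h0 h1 h2 h3 h4 h5
    simp only [enc]
    omega
  have hkey : ∀ i, altind (enc (M i)) = if i = i₀ ∨ i = i₁ then 1 else 0 := by
    intro i
    by_cases hi : i = i₀ ∨ i = i₁
    · rw [if_pos hi]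
      rcases hi with rfl|rfl
      · unfold altind
        rw [if_pos]
        interval_cases k <;> omega
      · unfold altind
        rw [if_pos]
        have hl3 : l = 3 - k := by omega
        interval_cases k <;> omega
    · rw [if_neg hi]
      unfold altind
      rw [if_neg]
      intro hc
      exact hi (honly i (alt_of_code (fun j => hle i j) hc))
  have halt : ((sortEnc M).map altind).sum = 2 := by
    rw [(hperm.map altind).sum_eq, List.map_ofFn, List.sum_ofFn]
    have : ∀ i : Fin (2^3), (altind ∘ fun i => enc (M i)) i =
        if i = i₀ ∨ i = i₁ then 1 else 0 := fun i => hkey i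
    rw [Finset.sum_congr rfl (fun i _ => this i)]
    have h1 : ∑ i : Fin (2^3), (if i = i₀ ∨ i = i₁ then 1 else 0) =
        (Finset.univ.filter (fun i => i = i₀ ∨ i = i₁)).card := by
      simp [Finset.sum_boole]
    rw [h1]
    have : Finset.univ.filter (fun i => i = i₀ ∨ i = i₁) = {i₀, i₁} := by
      ext x; simp
    rw [this, Finset.card_pair hne01]
  -- Step 6: extract the sorted code list.
  have hlen : (sortEnc M).length = 8 := by
    rw [hperm.length_eq, List.length_ofFn]
    norm_num
  have hsorted : List.Pairwise (· ≤ ·) (sortEnc M) := List.pairwise_insertionSort _ _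
  obtain ⟨l0, l1, l2, l3, l4, l5, l6, l7, hL⟩ := list8 hlen
  rw [hL] at hcoe hsorted h8 halt
  have hm36 : ∀ x ∈ ([l0,l1,l2,l3,l4,l5,l6,l7] : List ℕ), x ∈ codes36 := by
    intro x hx
    exact hs_elem x (by rw [← hcoe]; exact_mod_cast hx)
  have hb0 := c36_le l0 (hm36 l0 (by simp))
  have hb1 := c36_le l1 (hm36 l1 (by simp))
  have hb2 := c36_le l2 (hm36 l2 (by simp))
  have hb3 := c36_le l3 (hm36 l3 (by simp))
  have hb4 := c36_le l4 (hm36 l4 (by simp))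
  have hb5 := c36_le l5 (hm36 l5 (by simp))
  have hb6 := c36_le l6 (hm36 l6 (by simp))
  have hb7 := c36_le l7 (hm36 l7 (by simp))
  simp only [List.pairwise_cons, List.mem_cons, List.not_mem_nil, or_false,
    forall_eq_or_imp, forall_eq, List.Pairwise.nil, and_true] at hsorted
  -- Step 7: pair up the sorted codes.
  have d1 : ((([l0,l1,l2,l3,l4,l5,l6,l7] : List ℕ)) : Multiset ℕ) =
      l0 ::ₘ l7 ::ₘ (([l1,l2,l3,l4,l5,l6] : List ℕ) : Multiset ℕ) := by
    rw [Multiset.cons_coe, Multiset.cons_coe, Multiset.coe_eq_coe]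
    refine List.Perm.cons l0 ?_
    simpa using (List.perm_middle (a := l7) (l₁ := [l1,l2,l3,l4,l5,l6])
      (l₂ := ([] : List ℕ)))
  obtain ⟨h07, hsym1⟩ := pair_step (K := 4095) (a := l0) (b := l7)
    (m := (([l1,l2,l3,l4,l5,l6] : List ℕ) : Multiset ℕ))
    (by omega) hb7
    (by intro x hx; simp only [Multiset.mem_coe, List.mem_cons, List.not_mem_nil,
        or_false] at hx; rcases hx with rfl|rfl|rfl|rfl|rfl|rfl <;> omega)
    (by intro c hc; rw [← d1, hcoe]; exact hsymm c hc)
  have d2 : ((([l1,l2,l3,l4,l5,l6] : List ℕ)) : Multiset ℕ) =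
      l1 ::ₘ l6 ::ₘ (([l2,l3,l4,l5] : List ℕ) : Multiset ℕ) := by
    rw [Multiset.cons_coe, Multiset.cons_coe, Multiset.coe_eq_coe]
    refine List.Perm.cons l1 ?_
    simpa using (List.perm_middle (a := l6) (l₁ := [l2,l3,l4,l5])
      (l₂ := ([] : List ℕ)))
  obtain ⟨h16, hsym2⟩ := pair_step (K := 4095) (a := l1) (b := l6)
    (m := (([l2,l3,l4,l5] : List ℕ) : Multiset ℕ))
    (by omega) hb6
    (by intro x hx; simp only [Multiset.mem_coe, List.mem_cons, List.not_mem_nil,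
        or_false] at hx; rcases hx with rfl|rfl|rfl|rfl <;> omega)
    (by intro c hc; rw [← d2]; exact hsym1 c hc)
  have d3 : ((([l2,l3,l4,l5] : List ℕ)) : Multiset ℕ) =
      l2 ::ₘ l5 ::ₘ (([l3,l4] : List ℕ) : Multiset ℕ) := by
    rw [Multiset.cons_coe, Multiset.cons_coe, Multiset.coe_eq_coe]
    refine List.Perm.cons l2 ?_
    simpa using (List.perm_middle (a := l5) (l₁ := [l3,l4])
      (l₂ := ([] : List ℕ)))
  obtain ⟨h25, hsym3⟩ := pair_step (K := 4095) (a := l2) (b := l5)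
    (m := (([l3,l4] : List ℕ) : Multiset ℕ))
    (by omega) hb5
    (by intro x hx; simp only [Multiset.mem_coe, List.mem_cons, List.not_mem_nil,
        or_false] at hx; rcases hx with rfl|rfl <;> omega)
    (by intro c hc; rw [← d3]; exact hsym2 c hc)
  have d4 : ((([l3,l4] : List ℕ)) : Multiset ℕ) =
      l3 ::ₘ l4 ::ₘ (0 : Multiset ℕ) := by
    rfl
  obtain ⟨h34, -⟩ := pair_step (K := 4095) (a := l3) (b := l4)
    (m := (0 : Multiset ℕ))
    (by omega) hb4
    (by intro x hx; simp at hx)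
    (by intro c hc; rw [← d4]; exact hsym3 c hc)
  -- Step 8: run the search.
  have e7 : l7 = 4095 - l0 := by omega
  have e6 : l6 = 4095 - l1 := by omega
  have e5 : l5 = 4095 - l2 := by omega
  have e4 : l4 = 4095 - l3 := by omega
  subst e7 e6 e5 e4
  have hfull : fullL l0 l1 l2 l3 = [l0,l1,l2,l3,4095-l3,4095-l2,4095-l1,4095-l0] := rfl
  have hlow : ∀ x ∈ ([l0,l1,l2,l3] : List ℕ), x ∈ codesLow := by
    intro x hx
    simp only [List.mem_cons, List.not_mem_nil, or_false] at hx
    rcases hx with rfl|rfl|rfl|rfl <;>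
      exact mem_low _ (hm36 _ (by simp)) (by omega)
  have hfeas1 : feas (pl l0) := by
    intro j hj n hn
    have h := h8 j hj n hn
    simp only [pl, List.map_cons, List.map_nil, List.sum_cons, List.sum_nil] at h ⊢
    omega
  have hfeas2 : feas (pl l0 ++ pl l1) := by
    intro j hj n hn
    have h := h8 j hj n hn
    simp only [pl, List.cons_append, List.nil_append, List.map_cons, List.map_nil,
      List.sum_cons, List.sum_nil] at h ⊢
    omega
  have hfeas3 : feas (pl l0 ++ pl l1 ++ pl l2) := by
    intro j hj n hn
    have h := h8 j hj n hn
    simp only [pl, List.cons_append, List.nil_append, List.map_cons, List.map_nil,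
      List.sum_cons, List.sum_nil] at h ⊢
    omega
  have hfull8 : ∀ j ∈ cols, ∀ n ∈ vals, ((fullL l0 l1 l2 l3).map (ind j n)).sum = bnd n := by
    intro j hj n hn
    have h := h8 j hj n hn
    simpa [hfull] using h
  have hfullalt : ((fullL l0 l1 l2 l3).map altind).sum = 2 := by
    simpa [hfull] using halt
  have hG := mainSearch l0 (hlow l0 (by simp)) hfeas1 l1 (hlow l1 (by simp))
    (by omega) hfeas2 l2 (hlow l2 (by simp)) (by omega) hfeas3 l3
    (hlow l3 (by simp)) (by omega) hfull8 hfullalt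
  rw [hfull, ← hL] at hG
  -- Step 9: conclude.
  rcases hG with hGm | hGm | hGm
  · exact Or.inl ⟨equiv_of_mem hle boundA hGm,
      fun h => disjAB _ hGm (mem_of_equiv h),
      fun h => disjAC _ hGm (mem_of_equiv h)⟩
  · exact Or.inr (Or.inl ⟨fun h => disjAB _ (mem_of_equiv h) hGm,
      equiv_of_mem hle boundB hGm,
      fun h => disjBC _ hGm (mem_of_equiv h)⟩)
  · exact Or.inr (Or.inr ⟨fun h => disjAC _ (mem_of_equiv h) hGm,
      fun h => disjBC _ (mem_of_equiv h) hGm,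
      equiv_of_mem hle boundC hGm⟩)

end Warping
end
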